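/- Let X_1,...,X_n (n >= 2) be exchangeable random variables with finite fourth moments and sum_{j=1}^n X_j^2 = n almost surely. Then for each i, Var( E(X_i^2 | X_1,...,X_{i-1}) ) <= E(X_1^4) / (n - i + 1). -/

import Mathlib

open MeasureTheory ProbabilityTheory Finset

/-- Auxiliary: the σ-algebra generated by the first `i` coordinates. -/
def exchangeableAuxSigma {Ω : Type*} [MeasureSpace Ω] {n : ℕ} (X : Fin n → Ω → ℝ)
    (i : Fin n) : MeasurableSpace Ω :=
  ⨆ (j : Fin n) (_ : j < i), MeasurableSpace.comap (X j) inferInstance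

/-- For exchangeable random variables `X_1, …, X_n` (`n ≥ 2`, indexed by `Fin n`) with finite
fourth moments and `∑ X_j² = n` almost surely, the variance of the conditional expectation of
`X i ^ 2` given previous coordinates is at most `E(X₁⁴)/(n - i)` (zero-based `i`, matching
`n - i + 1` for one-based indexing). -/
theorem exchangeable_var_condexp_sq
    {Ω : Type*} [MeasureSpace Ω] [IsProbabilityMeasure (ℙ : Measure Ω)]
    {n : ℕ} (hn : 2 ≤ n) (X : Fin n → Ω → ℝ)
    (hXm : ∀ i, Measurable (X i))
    (hX4 : ∀ i, MemLp (X i) 4 ℙ)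
    (hexch : ∀ σ : Equiv.Perm (Fin n),
      Measure.map (fun ω => fun j => X (σ j) ω) ℙ = Measure.map (fun ω => fun j => X j ω) ℙ)
    (hsumsq : ∀ᵐ ω ∂ℙ, ∑ j, X j ω ^ 2 = (n : ℝ))
    (i : Fin n) :
    (∫ ω, ((ℙ[(fun ω' => X i ω' ^ 2) |
          ⨆ (j : Fin n) (_ : j < i), MeasurableSpace.comap (X j) inferInstance]) ω
        - ∫ ω', (ℙ[(fun ω'' => X i ω'' ^ 2) |
          ⨆ (j : Fin n) (_ : j < i), MeasurableSpace.comap (X j) inferInstance]) ω' ∂ℙ) ^ 2 ∂ℙ)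
      ≤ (∫ ω, X ⟨0, by omega⟩ ω ^ 4 ∂ℙ) / ((n : ℝ) - i) := by
  classical
  have hn0 : 0 < n := by omega
  set a : Fin n := ⟨0, by omega⟩ with ha
  set b : Fin n := ⟨1, by omega⟩ with hb
  have hab : a ≠ b := by simp [ha, hb, Fin.ext_iff]
  -- basic measurability
  have hW : Measurable (fun ω => fun k : Fin n => X k ω) :=
    measurable_pi_lambda _ fun k => hXm k
  -- key permutation identity
  have key : ∀ (σ : Equiv.Perm (Fin n)) (ψ : (Fin n → ℝ) → ℝ), Measurable ψ →
      ∫ ω, ψ (fun k => X (σ k) ω) ∂ℙ = ∫ ω, ψ (fun k => X k ω) ∂ℙ := by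
    intro σ ψ hψ
    have h1 : Measurable (fun ω => fun k : Fin n => X (σ k) ω) :=
      measurable_pi_lambda _ fun k => hXm (σ k)
    rw [← integral_map h1.aemeasurable hψ.aestronglyMeasurable, hexch σ,
        integral_map hW.aemeasurable hψ.aestronglyMeasurable]
  -- permutations realizing pairs
  have pairperm : ∀ j k : Fin n, j ≠ k → ∃ σ : Equiv.Perm (Fin n), σ a = j ∧ σ b = k := by
    intro j k hjk
    refine ⟨(Equiv.swap a j).trans (Equiv.swap ((Equiv.swap a j) b) k), ?_, ?_⟩
    · show Equiv.swap ((Equiv.swap a j) b) k ((Equiv.swap a j) a) = j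
      have h1 : (Equiv.swap a j) a ≠ (Equiv.swap a j) b := (Equiv.swap a j).injective.ne hab
      rw [Equiv.swap_apply_left] at h1
      rw [Equiv.swap_apply_left]
      exact Equiv.swap_apply_of_ne_of_ne h1 hjk
    · exact Equiv.swap_apply_left _ _
  -- integrability
  have hsq2 : ∀ j : Fin n, MemLp (fun ω => X j ω ^ 2) 2 ℙ := by
    intro j
    have hhalf : (1 : ENNReal) / 2 = 1 / 4 + 1 / 4 := by
      rw [one_div, one_div, ← ENNReal.add_halves 2⁻¹]
      norm_num [ENNReal.div_eq_inv_mul, ← ENNReal.mul_inv]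
    haveI : ENNReal.HolderTriple 4 4 2 := ⟨by simpa [one_div] using hhalf.symm⟩
    have h := (hX4 j).smul (hX4 j) (p := 4) (q := 4) (r := 2)
    simpa [smul_eq_mul, pow_two, Pi.mul_def] using h
  have hsqint : ∀ j, Integrable (fun ω => X j ω ^ 2) ℙ := fun j => (hsq2 j).integrable one_le_two
  have hprod : ∀ j k : Fin n, Integrable (fun ω => X j ω ^ 2 * X k ω ^ 2) ℙ := by
    intro j k
    have hone : (1 : ENNReal) / 1 = 1 / 2 + 1 / 2 := by
      rw [one_div, one_div, inv_one]
      exact ENNReal.inv_two_add_inv_two.symm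
    haveI : ENNReal.HolderTriple 2 2 1 := ⟨by simpa [one_div] using hone.symm⟩
    have h := (hsq2 k).smul (hsq2 j) (p := 2) (q := 2) (r := 1)
    exact memLp_one_iff_integrable.mp (by simpa [smul_eq_mul, Pi.mul_def] using h)
  have h4int : ∀ j, Integrable (fun ω => X j ω ^ 4) ℙ := by
    intro j
    simpa [show ∀ x : ℝ, x ^ 2 * x ^ 2 = x ^ 4 from fun x => by ring] using hprod j j
  -- identical moments
  have hm2 : ∀ j : Fin n, ∫ ω, X j ω ^ 2 ∂ℙ = ∫ ω, X a ω ^ 2 ∂ℙ := by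
    intro j
    have hψ : Measurable fun v : Fin n → ℝ => (v a) ^ 2 := (measurable_pi_apply a).pow_const 2
    have h := key (Equiv.swap a j) _ hψ
    simpa [Equiv.swap_apply_left] using h
  have hm4 : ∀ j : Fin n, ∫ ω, X j ω ^ 4 ∂ℙ = ∫ ω, X a ω ^ 4 ∂ℙ := by
    intro j
    have hψ : Measurable fun v : Fin n → ℝ => (v a) ^ 4 := (measurable_pi_apply a).pow_const 4
    have h := key (Equiv.swap a j) _ hψ
    simpa [Equiv.swap_apply_left] using h
  have hmc : ∀ j k : Fin n, j ≠ k →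
      ∫ ω, X j ω ^ 2 * X k ω ^ 2 ∂ℙ = ∫ ω, X a ω ^ 2 * X b ω ^ 2 ∂ℙ := by
    intro j k hjk
    obtain ⟨σ, hσa, hσb⟩ := pairperm j k hjk
    have hψ : Measurable fun v : Fin n → ℝ => (v a) ^ 2 * (v b) ^ 2 :=
      ((measurable_pi_apply a).pow_const 2).mul ((measurable_pi_apply b).pow_const 2)
    have h := key σ _ hψ
    simpa [hσa, hσb] using h
  set e4 : ℝ := ∫ ω, X a ω ^ 4 ∂ℙ with he4def
  set c : ℝ := ∫ ω, X a ω ^ 2 * X b ω ^ 2 ∂ℙ with hcdef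
  -- second moment is one
  have he2 : ∫ ω, X a ω ^ 2 ∂ℙ = 1 := by
    have h1 : ∫ ω, (∑ j, X j ω ^ 2) ∂ℙ = (n : ℝ) := by
      rw [integral_congr_ae hsumsq]; simp
    rw [integral_finset_sum _ (fun j _ => hsqint j),
        Finset.sum_congr rfl (fun j _ => hm2 j), Finset.sum_const, card_univ,
        Fintype.card_fin, nsmul_eq_mul] at h1
    have hne : (n : ℝ) ≠ 0 := Nat.cast_ne_zero.mpr (by omega)
    exact mul_left_cancel₀ hne (by rw [h1, mul_one])
  -- fourth moment at least one
  have he41 : (1 : ℝ) ≤ e4 := by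
    have h0 : 0 ≤ ∫ ω, (X a ω ^ 2 - 1) ^ 2 ∂ℙ := integral_nonneg fun ω => sq_nonneg _
    have hint2 : Integrable (fun ω => 2 * X a ω ^ 2) ℙ := (hsqint a).const_mul 2
    have hint1 : Integrable (fun ω => X a ω ^ 4 - 2 * X a ω ^ 2) ℙ := (h4int a).sub hint2
    have hexp : ∫ ω, (X a ω ^ 2 - 1) ^ 2 ∂ℙ = e4 - 2 * 1 + 1 := by
      have hfun : ∫ ω, (X a ω ^ 2 - 1) ^ 2 ∂ℙ
          = ∫ ω, (X a ω ^ 4 - 2 * X a ω ^ 2 + 1) ∂ℙ :=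
        integral_congr_ae (Filter.Eventually.of_forall fun ω => by ring)
      rw [hfun, integral_add hint1 (integrable_const 1),
          integral_sub (h4int a) hint2, integral_const_mul, he2]
      simp [he4def]
    rw [hexp] at h0; linarith
  -- value of each product integral
  have hterm : ∀ j k : Fin n, ∫ ω, X j ω ^ 2 * X k ω ^ 2 ∂ℙ = if j = k then e4 else c := by
    intro j k
    by_cases h : j = k
    · subst h
      rw [if_pos rfl, show (fun ω => X j ω ^ 2 * X j ω ^ 2) = fun ω => X j ω ^ 4 from
          funext fun ω => by ring]
      exact hm4 j
    · rw [if_neg h]; exact hmc j k h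
  -- c ≤ 1
  have hc1 : c ≤ 1 := by
    have htot : ∫ ω, (∑ j, X j ω ^ 2) ^ 2 ∂ℙ = (n : ℝ) ^ 2 := by
      rw [integral_congr_ae (hsumsq.mono fun ω h => by rw [h])]; simp
    have hexpand : ∫ ω, (∑ j, X j ω ^ 2) ^ 2 ∂ℙ
        = ∑ j : Fin n, ∑ k : Fin n, ∫ ω, X j ω ^ 2 * X k ω ^ 2 ∂ℙ := by
      rw [show (fun ω => (∑ j, X j ω ^ 2) ^ 2)
          = fun ω => ∑ j : Fin n, ∑ k : Fin n, X j ω ^ 2 * X k ω ^ 2 from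
          funext fun ω => by rw [sq, Finset.sum_mul_sum],
        integral_finset_sum _ (fun j _ => integrable_finset_sum _ fun k _ => hprod j k)]
      exact Finset.sum_congr rfl fun j _ => integral_finset_sum _ fun k _ => hprod j k
    have hrow : ∀ j : Fin n, ∑ k : Fin n, ∫ ω, X j ω ^ 2 * X k ω ^ 2 ∂ℙ
        = e4 + ((n : ℝ) - 1) * c := by
      intro j
      rw [Finset.sum_congr rfl (fun k _ => hterm j k)]
      have hsplit : ∀ k : Fin n, (if j = k then e4 else c)
          = c + (if j = k then e4 - c else 0) := by intro k; split_ifs <;> ring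
      simp_rw [hsplit]
      rw [Finset.sum_add_distrib, Finset.sum_const, Finset.sum_ite_eq, if_pos (mem_univ j),
          card_univ, Fintype.card_fin, nsmul_eq_mul]
      ring
    rw [hexpand, Finset.sum_congr rfl (fun j _ => hrow j), Finset.sum_const, card_univ,
        Fintype.card_fin, nsmul_eq_mul] at htot
    have hn2 : (2 : ℝ) ≤ (n : ℝ) := by exact_mod_cast hn
    have hpos : (0 : ℝ) < (n : ℝ) * ((n : ℝ) - 1) := by nlinarith
    have hkey2 : (n : ℝ) * ((n : ℝ) - 1) * c ≤ (n : ℝ) * ((n : ℝ) - 1) * 1 := by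
      nlinarith [mul_le_mul_of_nonneg_left he41 (by linarith : (0 : ℝ) ≤ (n : ℝ))]
    have := (mul_le_mul_iff_right₀ hpos).mp hkey2
    linarith
  -- the sigma-algebra
  have hgoal : (⨆ (j : Fin n) (_ : j < i), MeasurableSpace.comap (X j) inferInstance)
      = exchangeableAuxSigma X i := rfl
  rw [hgoal]
  have hFle : (exchangeableAuxSigma X i) ≤ (inferInstance : MeasurableSpace Ω) := by
    refine iSup₂_le fun j _ => ?_
    exact (hXm j).comap_le
  haveI : SigmaFinite ((ℙ : Measure Ω).trim hFle) := by infer_instance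
  set V : Ω → ({ j : Fin n // j < i } → ℝ) := fun ω j => X j.1 ω with hVdef
  have hFV : (exchangeableAuxSigma X i) = MeasurableSpace.comap V MeasurableSpace.pi := by
    have hpi : (MeasurableSpace.pi : MeasurableSpace ({ j : Fin n // j < i } → ℝ))
        = ⨆ a : { j : Fin n // j < i }, MeasurableSpace.comap (fun v => v a) inferInstance := rfl
    rw [hpi, MeasurableSpace.comap_iSup]
    simp_rw [MeasurableSpace.comap_comp]
    apply le_antisymm
    · refine iSup₂_le fun j hj => ?_
      exact le_iSup (fun a : { j : Fin n // j < i } =>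
        MeasurableSpace.comap ((fun v : { j : Fin n // j < i } → ℝ => v a) ∘ V) inferInstance)
        ⟨j, hj⟩
    · refine iSup_le fun p => ?_
      exact le_iSup₂ (f := fun (j : Fin n) (_ : j < i) =>
        MeasurableSpace.comap (X j) inferInstance) p.1 p.2
  -- set-integral invariance
  have hset : ∀ s : Set Ω, MeasurableSet[(exchangeableAuxSigma X i)] s → ∀ j : Fin n, i ≤ j →
      ∫ ω in s, X j ω ^ 2 ∂ℙ = ∫ ω in s, X i ω ^ 2 ∂ℙ := by
    intro s hs j hij
    have hsm : MeasurableSet s := hFle _ hs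
    rw [hFV] at hs
    obtain ⟨B, hB, rfl⟩ := hs
    have hsm' : MeasurableSet (V ⁻¹' B) := hsm
    set R : (Fin n → ℝ) → ({ j : Fin n // j < i } → ℝ) := fun v j => v j.1 with hRdef
    have hRm : Measurable R := measurable_pi_lambda _ fun j => measurable_pi_apply _
    set ψ : (Fin n → ℝ) → ℝ := (R ⁻¹' B).indicator (fun v => (v j) ^ 2) with hψdef
    have hψ : Measurable ψ := ((measurable_pi_apply j).pow_const 2).indicator (hRm hB)
    have hkey := key (Equiv.swap i j) _ hψ
    have hWmem : ∀ ω, ((fun k => X k ω) ∈ R ⁻¹' B) ↔ ω ∈ V ⁻¹' B := by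
      intro ω; exact Iff.rfl
    have hσmem : ∀ ω, ((fun k => X (Equiv.swap i j k) ω) ∈ R ⁻¹' B) ↔ ω ∈ V ⁻¹' B := by
      intro ω
      have h1 : R (fun k => X (Equiv.swap i j k) ω) = V ω := by
        funext k
        have hk1 : (k : Fin n) ≠ i := ne_of_lt k.2
        have hk2 : (k : Fin n) ≠ j := ne_of_lt (lt_of_lt_of_le k.2 hij)
        simp only [hRdef, hVdef]
        rw [Equiv.swap_apply_of_ne_of_ne hk1 hk2]
      simp only [Set.mem_preimage, h1]
    have e1 : ∫ ω, ψ (fun k => X k ω) ∂ℙ = ∫ ω in V ⁻¹' B, X j ω ^ 2 ∂ℙ := by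
      rw [← integral_indicator hsm']
      refine integral_congr_ae (Filter.Eventually.of_forall fun ω => ?_)
      rw [hψdef]
      simp only [Set.indicator_apply]
      exact if_congr (hWmem ω) rfl rfl
    have e2 : ∫ ω, ψ (fun k => X (Equiv.swap i j k) ω) ∂ℙ
        = ∫ ω in V ⁻¹' B, X i ω ^ 2 ∂ℙ := by
      rw [← integral_indicator hsm']
      refine integral_congr_ae (Filter.Eventually.of_forall fun ω => ?_)
      rw [hψdef]
      simp only [Set.indicator_apply, Equiv.swap_apply_right]
      exact if_congr (hσmem ω) rfl rfl
    rw [← e1, ← hkey, e2]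
  -- cardinality
  set m' : ℕ := n - (i : ℕ) with hm'def
  have hm'pos : 0 < m' := by omega
  have hm'ne : (m' : ℝ) ≠ 0 := Nat.cast_ne_zero.mpr (by omega)
  have hcards : (Ici i).card = m' := Fin.card_Ici i
  -- sum splitting
  have hunion : Finset.Iio i ∪ Finset.Ici i = Finset.univ := by
    ext k; simp only [Finset.mem_union, Finset.mem_Iio, Finset.mem_Ici, Finset.mem_univ, iff_true]
    exact lt_or_ge k i
  have hdisj : Disjoint (Finset.Iio i) (Finset.Ici i) := by
    simp only [Finset.disjoint_left, Finset.mem_Iio, Finset.mem_Ici]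
    intro k hk; exact not_le.mpr hk
  have hsplit : ∀ ω, ∑ j ∈ Iio i, X j ω ^ 2 + ∑ j ∈ Ici i, X j ω ^ 2 = ∑ j, X j ω ^ 2 := by
    intro ω; rw [← Finset.sum_union hdisj, hunion]
  -- candidate conditional expectation
  set g : Ω → ℝ := fun ω => ((n : ℝ) - ∑ j ∈ Iio i, X j ω ^ 2) / m' with hgdef
  have hgm : Measurable[(exchangeableAuxSigma X i)] g := by
    have hXj : ∀ j : Fin n, j < i → Measurable[(exchangeableAuxSigma X i)] (X j) := fun j hj =>
      measurable_iff_comap_le.mpr (le_iSup₂ (f := fun (j : Fin n) (_ : j < i) =>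
        MeasurableSpace.comap (X j) inferInstance) j hj)
    exact ((measurable_const.sub (Finset.measurable_sum _ fun j hj =>
      ((hXj j (mem_Iio.mp hj)).pow_const 2))).div_const _)
  have hgint : Integrable g ℙ :=
    (((integrable_const ((n : ℝ))).sub (integrable_finset_sum _ fun j _ => hsqint j)).div_const _)
  have hFint : Integrable (fun ω => X i ω ^ 2) ℙ := hsqint i
  have hgeq : ∀ s : Set Ω, MeasurableSet[(exchangeableAuxSigma X i)] s → ℙ s < ⊤ →
      ∫ ω in s, g ω ∂ℙ = ∫ ω in s, X i ω ^ 2 ∂ℙ := by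
    intro s hs _
    have hsm : MeasurableSet s := hFle _ hs
    have h1 : ∫ ω in s, g ω ∂ℙ = ∫ ω in s, (∑ j ∈ Ici i, X j ω ^ 2) / m' ∂ℙ := by
      refine setIntegral_congr_ae hsm ?_
      filter_upwards [hsumsq] with ω hω _
      rw [hgdef]
      have := hsplit ω
      simp only
      rw [show (n : ℝ) - ∑ j ∈ Iio i, X j ω ^ 2 = ∑ j ∈ Ici i, X j ω ^ 2 by
        rw [← hω, ← this]; ring]
    rw [h1, integral_div, integral_finset_sum _ (fun j _ => (hsqint j).integrableOn),
        Finset.sum_congr rfl (fun j hj => hset s hs j (mem_Ici.mp hj)),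
        Finset.sum_const, hcards, nsmul_eq_mul, mul_div_cancel_left₀ _ hm'ne]
  have hcond : g =ᵐ[ℙ] ℙ[fun ω => X i ω ^ 2 | (exchangeableAuxSigma X i)] :=
    ae_eq_condExp_of_forall_setIntegral_eq hFle hFint (fun s _ _ => hgint.integrableOn) hgeq
      (hgm.stronglyMeasurable.aestronglyMeasurable)
  -- g equals S/m' a.e.
  set S : Ω → ℝ := fun ω => ∑ j ∈ Ici i, X j ω ^ 2 with hSdef
  have hgS : g =ᵐ[ℙ] fun ω => S ω / m' := by
    filter_upwards [hsumsq] with ω hω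
    rw [hgdef, hSdef]
    simp only
    rw [show (n : ℝ) - ∑ j ∈ Iio i, X j ω ^ 2 = ∑ j ∈ Ici i, X j ω ^ 2 by
      rw [← hω, ← hsplit ω]; ring]
  -- moments of S
  have hSint : Integrable S ℙ := integrable_finset_sum _ fun j _ => hsqint j
  have hSsq : (fun ω => S ω ^ 2)
      = fun ω => ∑ j ∈ Ici i, ∑ k ∈ Ici i, X j ω ^ 2 * X k ω ^ 2 :=
    funext fun ω => by rw [hSdef]; simp only; rw [sq, Finset.sum_mul_sum]
  have hS2int : Integrable (fun ω => S ω ^ 2) ℙ := by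
    rw [hSsq]; exact integrable_finset_sum _ fun j _ => integrable_finset_sum _ fun k _ => hprod j k
  have hES : ∫ ω, S ω ∂ℙ = (m' : ℝ) := by
    rw [hSdef]
    simp only
    rw [integral_finset_sum _ (fun j _ => hsqint j),
        Finset.sum_congr rfl (fun j _ => (hm2 j).trans he2), Finset.sum_const, hcards,
        nsmul_eq_mul, mul_one]
  have hES2 : ∫ ω, S ω ^ 2 ∂ℙ = m' * e4 + ((m' : ℝ) ^ 2 - m') * c := by
    rw [hSsq, integral_finset_sum _ (fun j _ => integrable_finset_sum _ fun k _ => hprod j k),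
        Finset.sum_congr rfl (fun j _ => integral_finset_sum _ fun k _ => hprod j k)]
    have hrow : ∀ j ∈ Ici i, ∑ k ∈ Ici i, ∫ ω, X j ω ^ 2 * X k ω ^ 2 ∂ℙ
        = c * m' + (e4 - c) := by
      intro j hj
      rw [Finset.sum_congr rfl (fun k _ => hterm j k)]
      have hsplit' : ∀ k : Fin n, (if j = k then e4 else c)
          = c + (if j = k then e4 - c else 0) := by intro k; split_ifs <;> ring
      simp_rw [hsplit']
      rw [Finset.sum_add_distrib, Finset.sum_const, Finset.sum_ite_eq, if_pos hj, hcards,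
          nsmul_eq_mul]
      ring
    rw [Finset.sum_congr rfl hrow, Finset.sum_const, hcards, nsmul_eq_mul]
    ring
  -- variance of S
  have hvarS : ∫ ω, (S ω - m') ^ 2 ∂ℙ = ∫ ω, S ω ^ 2 ∂ℙ - (m' : ℝ) ^ 2 := by
    have hint2 : Integrable (fun ω => 2 * (m' : ℝ) * S ω) ℙ := hSint.const_mul _
    have hint1 : Integrable (fun ω => S ω ^ 2 - 2 * (m' : ℝ) * S ω) ℙ := hS2int.sub hint2
    have hfun : ∫ ω, (S ω - m') ^ 2 ∂ℙ
        = ∫ ω, (S ω ^ 2 - 2 * (m' : ℝ) * S ω + (m' : ℝ) ^ 2) ∂ℙ :=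
      integral_congr_ae (Filter.Eventually.of_forall fun ω => by ring)
    rw [hfun, integral_add hint1 (integrable_const _),
        integral_sub hS2int hint2, integral_const_mul, hES]
    simp only [integral_const, measure_univ, probReal_univ, ENNReal.toReal_one, smul_eq_mul, one_mul]
    ring
  -- conditional expectation mean
  have hμf : ∫ ω, (ℙ[fun ω' => X i ω' ^ 2 | (exchangeableAuxSigma X i)]) ω ∂ℙ = 1 := by
    rw [integral_condExp hFle]
    exact (hm2 i).trans he2
  -- rewrite goal
  rw [hμf]
  have hLHS : ∫ ω, ((ℙ[fun ω' => X i ω' ^ 2 | (exchangeableAuxSigma X i)]) ω - 1) ^ 2 ∂ℙ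
      = (∫ ω, (S ω - m') ^ 2 ∂ℙ) / (m' : ℝ) ^ 2 := by
    rw [← integral_div]
    refine integral_congr_ae ?_
    filter_upwards [hcond, hgS] with ω h1 h2
    rw [← h1, h2]
    field_simp
  rw [hLHS, hvarS, hES2]
  have hni : ((n : ℝ) - i) = (m' : ℝ) := by
    rw [hm'def]
    have : (i : ℕ) ≤ n := le_of_lt i.2
    push_cast [this]
    ring
  rw [hni]
  rw [div_le_div_iff₀ (by positivity) (by positivity)]
  have hm'1 : (1 : ℝ) ≤ (m' : ℝ) := by exact_mod_cast hm'pos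
  have h0 : (0 : ℝ) ≤ (m' : ℝ) ^ 2 - m' := by nlinarith
  have h1 : ((m' : ℝ) ^ 2 - m') * c ≤ (m' : ℝ) ^ 2 - m' := by nlinarith [hc1]
  nlinarith [h1, he41, mul_le_mul_of_nonneg_right h1 (by positivity : (0 : ℝ) ≤ (m' : ℝ)),
    sq_nonneg ((m' : ℝ))]
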